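/- Let f = x_1 x_2 ⋯ x_n · l, where l = α_1 x_1 + ⋯ + α_n x_n with all α_i ∈ K nonzero. If L_1, …, L_n ∈ R are linear forms (homogeneous of degree 1) with L_1 f_{x_1} + ⋯ + L_n f_{x_n} = 0, then L_1 = ⋯ = L_n = 0. That is, the Jacobian ideal of f admits no linear syzygy. -/

import Mathlib

open MvPolynomial Finset

lemma deg_one_single {n : ℕ} {m : Fin n →₀ ℕ} (h : m.degree = 1) :
    ∃ i, m = Finsupp.single i 1 := by
  have hm : m ≠ 0 := by rintro rfl; simp [Finsupp.degree] at h
  obtain ⟨a, ha⟩ := Finsupp.support_nonempty_iff.2 hm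
  have h2 : m a + (∑ i ∈ m.support.erase a, m i) = 1 := by
    rw [Finset.add_sum_erase _ _ ha]; exact h
  have hma : 1 ≤ m a := Nat.one_le_iff_ne_zero.2 (Finsupp.mem_support_iff.1 ha)
  have hma1 : m a = 1 := by omega
  have hrest : ∑ i ∈ m.support.erase a, m i = 0 := by omega
  refine ⟨a, ?_⟩
  ext b
  rcases eq_or_ne b a with rfl | hb
  · simpa using hma1
  · rw [Finsupp.single_apply, if_neg (Ne.symm hb)]
    by_contra hb0
    exact hb0 ((Finset.sum_eq_zero_iff).1 hrest b
      (Finset.mem_erase.2 ⟨hb, Finsupp.mem_support_iff.2 hb0⟩))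

lemma homog1 {K : Type*} [CommRing K] {n : ℕ} {p : MvPolynomial (Fin n) K}
    (hp : p.IsHomogeneous 1) :
    p = ∑ i, C (p.coeff (Finsupp.single i 1)) * X i := by
  ext m
  rw [coeff_sum]
  simp only [coeff_C_mul, coeff_X']
  by_cases hm : ∃ i, m = Finsupp.single i 1
  · obtain ⟨i, rfl⟩ := hm
    rw [Finset.sum_eq_single i]
    · simp
    · intro b _ hb
      rw [if_neg (fun h => hb (Finsupp.single_left_injective one_ne_zero h)), mul_zero]
    · simp
  · rw [hp.coeff_eq_zero (fun hd => hm (deg_one_single hd))]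
    symm
    apply Finset.sum_eq_zero
    intro i _
    rw [if_neg (fun h => hm ⟨i, h.symm⟩), mul_zero]

lemma coeff_lin {K : Type*} [CommRing K] {n : ℕ} {s : Finset (Fin n)} (a : Fin n → K)
    (j : Fin n) (hj : j ∈ s) :
    coeff (Finsupp.single j 1) (∑ i ∈ s, C (a i) * X i) = a j := by
  rw [coeff_sum]
  simp only [coeff_C_mul, coeff_X']
  rw [Finset.sum_eq_single j]
  · simp
  · intro b _ hb
    rw [if_neg (fun h => hb (Finsupp.single_left_injective one_ne_zero h)), mul_zero]
  · exact fun h => absurd hj h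

lemma pderiv_prod_zero {K : Type*} [CommRing K] {n : ℕ} (j : Fin n) (s : Finset (Fin n))
    (hj : j ∉ s) : pderiv j (∏ i ∈ s, (X i : MvPolynomial (Fin n) K)) = 0 := by
  induction s using Finset.induction with
  | empty => simp
  | insert a s' h ih =>
    rw [Finset.prod_insert h, pderiv_mul,
      pderiv_X_of_ne (by rintro rfl; exact hj (mem_insert_self _ _)),
      ih (fun hm => hj (mem_insert_of_mem hm))]
    ring

lemma pderiv_prod_X {K : Type*} [CommRing K] {n : ℕ} (j : Fin n) :
    pderiv j (∏ i, (X i : MvPolynomial (Fin n) K)) = ∏ i ∈ univ.erase j, X i := by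
  rw [← Finset.mul_prod_erase _ _ (mem_univ j), pderiv_mul, pderiv_X_self,
    pderiv_prod_zero j _ (notMem_erase j univ)]
  ring

lemma aeval_linsum {K : Type*} [CommRing K] {n : ℕ} (a : Fin n → K) (k : Fin n) :
    aeval (fun i => if i = k then (0 : MvPolynomial (Fin n) K) else X i) (∑ i, C (a i) * X i) =
      ∑ i ∈ univ.erase k, C (a i) * X i := by
  rw [map_sum, ← Finset.sum_erase_add _ _ (mem_univ k)]
  have h2 : aeval (fun i => if i = k then (0 : MvPolynomial (Fin n) K) else X i)
      (C (a k) * X k) = 0 := by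
    rw [map_mul, aeval_X, if_pos rfl, mul_zero]
  rw [h2, add_zero]
  refine Finset.sum_congr rfl fun i hi => ?_
  rw [map_mul, aeval_X, if_neg (Finset.mem_erase.1 hi).1, aeval_C, algebraMap_eq]

theorem stmt2 {K : Type*} [Field K] [Infinite K] {n : ℕ} (hn : 2 ≤ n)
    (hchar : ((n : K) + 1) ≠ 0)
    (α : Fin n → K) (hα : ∀ i, α i ≠ 0)
    (l f : MvPolynomial (Fin n) K)
    (hl : l = ∑ i, C (α i) * X i)
    (hf : f = (∏ i, X i) * l)
    (L : Fin n → MvPolynomial (Fin n) K)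
    (hL : ∀ i, (L i).IsHomogeneous 1)
    (hsyz : ∑ i, L i * pderiv i f = 0) :
    ∀ i, L i = 0 := by
  have hnt : Nontrivial (Fin n) := Fin.nontrivial_iff_two_le.2 hn
  set Q : Fin n → MvPolynomial (Fin n) K := fun j => ∏ i ∈ univ.erase j, X i with hQ
  have hQne : ∀ j, Q j ≠ 0 := fun j =>
    Finset.prod_ne_zero_iff.2 (fun i _ => X_ne_zero i)
  -- compute pderiv of f
  have hpd : ∀ j, pderiv j f = Q j * (l + C (α j) * X j) := by
    intro j
    have hlj : pderiv j l = C (α j) := by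
      rw [hl, map_sum, Finset.sum_eq_single j]
      · simp [pderiv_C_mul]
      · intro b _ hb; simp [pderiv_C_mul, pderiv_X_of_ne hb]
      · simp
    rw [hf, pderiv_mul, pderiv_prod_X, hlj, ← Finset.mul_prod_erase _ X (mem_univ j)]
    ring
  simp only [hpd] at hsyz
  -- the coefficients of L
  set c : Fin n → Fin n → K := fun k i => coeff (Finsupp.single i 1) (L k) with hc
  -- Step A: L k is a multiple of X k
  have hLX : ∀ k, L k = C (c k k) * X k := by
    intro k
    set φ : MvPolynomial (Fin n) K →ₐ[K] MvPolynomial (Fin n) K :=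
      aeval (fun i => if i = k then 0 else X i) with hφ
    have h1 : φ (∑ j, L j * (Q j * (l + C (α j) * X j))) = 0 := by rw [hsyz, map_zero]
    rw [map_sum] at h1
    rw [Finset.sum_eq_single k] at h1
    rotate_left
    · intro b _ hb
      have : φ (Q b) = 0 := by
        rw [hQ, map_prod]
        refine Finset.prod_eq_zero (Finset.mem_erase.2 ⟨Ne.symm hb, mem_univ k⟩) ?_
        simp [hφ]
      rw [map_mul, map_mul, this, zero_mul, mul_zero]
    · exact fun h => absurd (mem_univ k) h
    -- simplify the k-term
    have hQk : φ (Q k) = Q k := by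
      rw [hQ, map_prod]
      refine Finset.prod_congr rfl (fun i hi => ?_)
      simp [hφ, (Finset.mem_erase.1 hi).1]
    have hzero : (aeval (fun i => if i = k then (0 : MvPolynomial (Fin n) K) else X i))
        (C (α k) * X k) = 0 := by
      rw [map_mul, aeval_X, if_pos rfl, mul_zero]
    have hlk : φ (l + C (α k) * X k) = ∑ i ∈ univ.erase k, C (α i) * X i := by
      rw [hφ, hl, map_add, aeval_linsum, hzero, add_zero]
    rw [map_mul, map_mul, hQk, hlk] at h1
    have hlkne : (∑ i ∈ univ.erase k, C (α i) * X i : MvPolynomial (Fin n) K) ≠ 0 := by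
      obtain ⟨j, hj⟩ := exists_ne k
      intro h
      have := coeff_lin α j (Finset.mem_erase.2 ⟨hj, mem_univ j⟩)
      rw [h, coeff_zero] at this
      exact hα j this.symm
    have hφLk : φ (L k) = 0 := by
      rcases mul_eq_zero.1 h1 with h | h
      · exact h
      · exact absurd h (mul_ne_zero (hQne k) hlkne)
    -- now expand L k
    have hdec : L k = ∑ i, C (c k i) * X i := homog1 (hL k)
    have hφdec : (∑ i ∈ univ.erase k, C (c k i) * X i : MvPolynomial (Fin n) K) = 0 := by
      rw [← hφLk, hdec, hφ, aeval_linsum]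
    have hcz : ∀ i, i ≠ k → c k i = 0 := by
      intro i hi
      have := coeff_lin (c k) i (Finset.mem_erase.2 ⟨hi, mem_univ i⟩)
      rw [hφdec, coeff_zero] at this
      exact this.symm
    rw [hdec, Finset.sum_eq_single k]
    · intro b _ hb; rw [hcz b hb, map_zero, zero_mul]
    · simp
  -- Step B: plug in
  simp only [hLX] at hsyz
  have hsyz2 : (∏ i, X i : MvPolynomial (Fin n) K) *
      (∑ k, C (c k k) * (l + C (α k) * X k)) = 0 := by
    rw [Finset.mul_sum, ← hsyz]
    refine Finset.sum_congr rfl fun k _ => ?_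
    rw [← Finset.mul_prod_erase _ X (mem_univ k)]
    ring
  have hPne : (∏ i, X i : MvPolynomial (Fin n) K) ≠ 0 :=
    Finset.prod_ne_zero_iff.2 (fun i _ => X_ne_zero i)
  have hg0 : (∑ k, C (c k k) * (l + C (α k) * X k) : MvPolynomial (Fin n) K) = 0 :=
    (mul_eq_zero.1 hsyz2).resolve_left hPne
  -- extract scalar equations
  have hco : ∀ i, (∑ k, c k k) * α i + c i i * α i = 0 := by
    intro i
    have h := congrArg (coeff (Finsupp.single i 1)) hg0
    rw [coeff_zero, coeff_sum] at h
    have hcl : coeff (Finsupp.single i 1) l = α i := by rw [hl]; exact coeff_lin α i (mem_univ i)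
    simp only [coeff_C_mul, coeff_add, hcl, coeff_X',
      Finsupp.single_left_inj (one_ne_zero (α := ℕ))] at h
    simp only [mul_add, mul_ite, mul_one, mul_zero, Finset.sum_add_distrib,
      Finset.sum_ite_eq', mem_univ, if_pos] at h
    rw [← Finset.sum_mul] at h
    convert h using 2
  set S : K := ∑ k, c k k with hS
  have hci : ∀ i, c i i = -S := by
    intro i
    have := hco i
    have h2 : (S + c i i) * α i = 0 := by linear_combination this
    rcases mul_eq_zero.1 h2 with h | h
    · linear_combination h
    · exact absurd h (hα i)
  have hSzero : S = 0 := by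
    have h1 : S = ∑ _k : Fin n, (-S) := by
      rw [hS]; exact Finset.sum_congr rfl fun k _ => hci k
    rw [Finset.sum_const, card_univ, Fintype.card_fin, nsmul_eq_mul] at h1
    have h2 : ((n : K) + 1) * S = 0 := by linear_combination h1
    exact (mul_eq_zero.1 h2).resolve_left hchar
  intro i
  rw [hLX i, hci i, hSzero, neg_zero, map_zero, zero_mul]
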